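/- The matrix (-1 0; 0 -1) in SL₂(ℤ) can be written as a product of 6 matrices each conjugate in SL₂(ℤ) to the elementary Dehn twist (1 1; 0 1). -/

import Mathlib

/-- The elementary Dehn twist `U = (1 1; 0 1)` in SL₂(ℤ). -/
def dehnTwist : Matrix.SpecialLinearGroup (Fin 2) ℤ :=
  ⟨!![1, 1; 0, 1], by norm_num [Matrix.det_fin_two_of]⟩

/-- `-I` in SL₂(ℤ). -/
def negOne : Matrix.SpecialLinearGroup (Fin 2) ℤ :=
  ⟨!![-1, 0; 0, -1], by norm_num [Matrix.det_fin_two_of]⟩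

/-- `-I ∈ SL₂(ℤ)` is a product of 6 conjugates of the elementary Dehn twist
`U = (1 1; 0 1)`: there exist `g₁,…,g₆ ∈ SL₂(ℤ)` with `-I = ∏ᵢ gᵢ U gᵢ⁻¹`. -/
def sMat : Matrix.SpecialLinearGroup (Fin 2) ℤ :=
  ⟨!![0, -1; 1, 0], by norm_num [Matrix.det_fin_two_of]⟩

theorem stmt_3 :
    ∃ g : Fin 6 → Matrix.SpecialLinearGroup (Fin 2) ℤ,
      negOne = ((List.finRange 6).map fun i => g i * dehnTwist * (g i)⁻¹).prod := by
  use fun i => if i.val % 2 = 0 then 1 else sMat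
  show negOne = _
  simp only [List.finRange, List.ofFn, List.map, Fin.foldr_succ, Fin.foldr_zero]
  norm_num
  ext i j
  fin_cases i <;> fin_cases j <;>
    simp only [Matrix.SpecialLinearGroup.coe_mul, Matrix.SpecialLinearGroup.coe_inv] <;>
    simp [negOne, dehnTwist, sMat, Matrix.SpecialLinearGroup.coe_mul,
      Matrix.SpecialLinearGroup.SL2_inv_expl, Matrix.mul_apply, Matrix.vecMul,
      dotProduct, Fin.sum_univ_succ, Matrix.adjugate_fin_two]
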